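/- For all I, I' ∈ B_{k,n}: Σ_{J ∈ B_{k,n}} S_J(ξ_n(I)) · conj( S_J(ξ_n(I')) ) equals n^k / |V(ξ_n(I))|² if I = I', and equals 0 if I ≠ I'. In particular, the vectors w^{(I)} = ( conj(S_J(ξ_n(I))) )_{J∈B_{k,n}} for I ∈ B_{k,n} form an orthogonal basis of ℂ^{B_{k,n}} with ‖w^{(I)}‖² = n^k/|V(ξ_n(I))|². -/

import Mathlib

noncomputable section

open Finset

namespace Paper

def aJ (k : ℕ) (J : Fin k → ℤ) (u : Fin k → ℝ) : ℂ :=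
  Matrix.det (Matrix.of fun l m : Fin k => Complex.exp (Complex.I * (u l : ℂ) * (J m : ℂ)))

def I0 (k : ℕ) : Fin k → ℤ := fun i => (k : ℤ) - 1 - (i : ℤ)

def Vdm (k : ℕ) (u : Fin k → ℝ) : ℂ := aJ k (I0 k) u

def SJ (k : ℕ) (J : Fin k → ℤ) (u : Fin k → ℝ) : ℂ := aJ k J u / Vdm k u

def xi (k n : ℕ) (I : Fin k → ℤ) : Fin k → ℝ :=
  fun j => (2 * Real.pi / (n : ℝ)) * ((I j : ℝ) - ((k : ℝ) - 1) / 2)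

/-- `B_{k,n}` as the type of strictly decreasing `k`-tuples with values in `{0,…,n-1}`. -/
abbrev Conf (k n : ℕ) := {I : Fin k → Fin n // ∀ i j : Fin k, i < j → I j < I i}

/-- An element of `B_{k,n}` viewed as an integer vector. -/
def cv {k n : ℕ} (I : Conf k n) : Fin k → ℤ := fun i => ((I.val i : ℕ) : ℤ)

def W (n : ℕ) (a : ℤ) : ℂ := Complex.exp (2 * Real.pi * Complex.I * a / n)

lemma W_zero (n : ℕ) : W n 0 = 1 := by simp [W]

lemma W_add (n : ℕ) (a b : ℤ) : W n (a + b) = W n a * W n b := by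
  rw [W, W, W, ← Complex.exp_add]; congr 1; push_cast; ring

lemma W_ne_zero (n : ℕ) (a : ℤ) : W n a ≠ 0 := Complex.exp_ne_zero _

lemma W_pow (n : ℕ) (a : ℤ) (j : ℕ) : W n a ^ j = W n (a * j) := by
  rw [W, W, ← Complex.exp_nat_mul]; congr 1; push_cast; ring

lemma W_eq_one_iff {n : ℕ} (hn : 0 < n) (a : ℤ) : W n a = 1 ↔ (n : ℤ) ∣ a := by
  have hn' : (n : ℂ) ≠ 0 := Nat.cast_ne_zero.mpr hn.ne'
  have h2 : (2 * (Real.pi : ℂ) * Complex.I) ≠ 0 := by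
    simp [Real.pi_ne_zero, Complex.I_ne_zero]
  rw [W, Complex.exp_eq_one_iff]
  constructor
  · rintro ⟨m, hm⟩
    refine ⟨m, ?_⟩
    have key : (2 * (Real.pi : ℂ) * Complex.I) * (a : ℂ) =
        (2 * (Real.pi : ℂ) * Complex.I) * ((m : ℂ) * (n : ℂ)) := by
      field_simp at hm
      linear_combination (2 * (Real.pi : ℂ) * Complex.I) * hm
    have := mul_left_cancel₀ h2 key
    have : a = m * (n:ℤ) := by exact_mod_cast this
    linarith [mul_comm m (n:ℤ)]
  · rintro ⟨m, rfl⟩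
    refine ⟨m, ?_⟩
    push_cast
    field_simp

lemma W_mul_n (n : ℕ) (hn : 0 < n) (a : ℤ) : W n (a * n) = 1 :=
  (W_eq_one_iff hn _).mpr ⟨a, mul_comm _ _⟩

lemma W_geom {n : ℕ} (hn : 0 < n) {a : ℤ} (ha : a.natAbs < n) :
    ∑ j : Fin n, W n (a * (j : ℤ)) = if a = 0 then (n : ℂ) else 0 := by
  have h : ∀ j : Fin n, W n (a * (j : ℤ)) = W n a ^ (j : ℕ) := by
    intro j; rw [W_pow]
  rw [Finset.sum_congr rfl fun j _ => h j]
  split_ifs with h0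
  · subst h0; simp [W_zero]
  · have h1 : W n a ≠ 1 := by
      intro h1
      rw [W_eq_one_iff hn] at h1
      have hd := h1
      exact h0 (Int.eq_zero_of_dvd_of_natAbs_lt_natAbs hd (by simpa using ha))
    rw [Fin.sum_univ_eq_sum_range (fun j => W n a ^ j), geom_sum_eq h1]
    have : W n a ^ n = 1 := by rw [W_pow, W_mul_n n hn]
    simp [this]

lemma conj_aJ (k : ℕ) (J : Fin k → ℤ) (u : Fin k → ℝ) :
    (starRingEnd ℂ) (aJ k J u) =
      Matrix.det (Matrix.of fun l m : Fin k =>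
        Complex.exp (-(Complex.I * (u l : ℂ) * (J m : ℂ)))) := by
  rw [aJ, RingHom.map_det]
  congr 1
  ext l m
  simp [Matrix.map_apply, ← Complex.exp_conj, map_mul, Complex.conj_I, Complex.conj_ofReal]

lemma aJ_mul_conj (k n : ℕ) (A A' : Fin k → ℤ) (J : Fin k → ℤ) :
    aJ k J (xi k n A) * (starRingEnd ℂ) (aJ k J (xi k n A')) =
      Matrix.det (Matrix.of fun l m : Fin k => W n (A l * J m)) *
      Matrix.det (Matrix.of fun l m : Fin k => W n (-(A' l) * J m)) := by
  set v : Fin k → ℂ := fun m =>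
    Complex.exp (-(Real.pi * ((k : ℂ) - 1) * (J m : ℂ) / (n : ℂ)) * Complex.I) with hv
  set v' : Fin k → ℂ := fun m =>
    Complex.exp ((Real.pi * ((k : ℂ) - 1) * (J m : ℂ) / (n : ℂ)) * Complex.I) with hv'
  have h1 : aJ k J (xi k n A) =
      (∏ m, v m) * Matrix.det (Matrix.of fun l m : Fin k => W n (A l * J m)) := by
    rw [aJ, ← Matrix.det_mul_row]
    congr 1
    ext l m
    simp only [Matrix.of_apply, hv, W, ← Complex.exp_add]
    congr 1
    unfold xi
    push_cast
    ring
  have h2 : (starRingEnd ℂ) (aJ k J (xi k n A')) =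
      (∏ m, v' m) * Matrix.det (Matrix.of fun l m : Fin k => W n (-(A' l) * J m)) := by
    rw [conj_aJ, ← Matrix.det_mul_row]
    congr 1
    ext l m
    simp only [Matrix.of_apply, hv', W, ← Complex.exp_add]
    congr 1
    unfold xi
    push_cast
    ring
  have h3 : (∏ m, v m) * (∏ m, v' m) = 1 := by
    rw [← Finset.prod_mul_distrib]
    refine Finset.prod_eq_one fun m _ => ?_
    rw [hv, hv', ← Complex.exp_add]
    simp
  rw [h1, h2]
  set D1 := Matrix.det (Matrix.of fun l m : Fin k => W n (A l * J m))
  set D2 := Matrix.det (Matrix.of fun l m : Fin k => W n (-(A' l) * J m))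
  linear_combination D1 * D2 * h3

lemma conf_strictAnti {k n : ℕ} (I : Conf k n) : StrictAnti I.val :=
  fun a b h => I.2 a b h

lemma conf_rev_strictMono {k n : ℕ} (I : Conf k n) : StrictMono (I.val ∘ Fin.rev) := by
  intro a b hab
  exact conf_strictAnti I (Fin.rev_lt_rev.mpr hab)

lemma phi_inj {k n : ℕ} : Function.Injective
    (fun p : Conf k n × Equiv.Perm (Fin k) => p.1.val ∘ ⇑p.2) := by
  rintro ⟨J, π⟩ ⟨J', π'⟩ h
  simp only at h
  haveI : WellFoundedLT (Fin k) := inferInstance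
  have hr : Set.range (J.val ∘ Fin.rev) = Set.range (J'.val ∘ Fin.rev) := by
    have h1 : J.val '' Set.univ = J'.val '' Set.univ := by
      have h2 := congrArg Set.range h
      rwa [Set.range_comp, Set.range_comp, π.surjective.range_eq, π'.surjective.range_eq] at h2
    rw [Set.range_comp, Set.range_comp, Fin.rev_surjective.range_eq]
    exact h1
  have hvv : J.val ∘ Fin.rev = J'.val ∘ Fin.rev :=
    ((conf_rev_strictMono J).range_inj (conf_rev_strictMono J')).mp hr
  have hval : J.val = J'.val := by
    funext i
    have := congrFun hvv (Fin.rev i)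
    simpa [Fin.rev_rev] using this
  have hJ : J = J' := Subtype.ext hval
  subst hJ
  refine Prod.ext rfl (Equiv.ext fun i => ?_)
  have h2 := congrFun h i
  exact (conf_strictAnti J).injective h2

lemma phi_surj {k n : ℕ} (g : Fin k → Fin n) (hg : Function.Injective g) :
    ∃ p : Conf k n × Equiv.Perm (Fin k), p.1.val ∘ ⇑p.2 = g := by
  classical
  set s : Finset (Fin n) := Finset.image g Finset.univ with hs
  have hcard : s.card = k := by
    rw [hs, Finset.card_image_of_injective _ hg, Finset.card_univ, Fintype.card_fin]
  set e := s.orderIsoOfFin hcard with he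
  have hmem : ∀ i, g i ∈ s := fun i => by simp [hs]
  set π' : Fin k → Fin k := fun i => Fin.rev (e.symm ⟨g i, hmem i⟩) with hπ'
  have hπ'inj : Function.Injective π' := by
    intro a b hab
    have h1 : e.symm ⟨g a, hmem a⟩ = e.symm ⟨g b, hmem b⟩ := Fin.rev_injective hab
    have h2 : (⟨g a, hmem a⟩ : {x // x ∈ s}) = ⟨g b, hmem b⟩ := e.symm.injective h1
    exact hg (Subtype.ext_iff.mp h2)
  refine ⟨⟨⟨fun i => (e (Fin.rev i) : Fin n), ?_⟩,
    Equiv.ofBijective π' (Finite.injective_iff_bijective.mp hπ'inj)⟩, ?_⟩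
  · intro i j hij
    exact e.strictMono (Fin.rev_lt_rev.mpr hij)
  · funext i
    simp only [Function.comp_apply, Equiv.ofBijective_apply, hπ', Fin.rev_rev]
    simp

lemma cond_iff {k n : ℕ} (I I' : Conf k n) (σ τ : Equiv.Perm (Fin k)) :
    (∀ m, cv I (σ m) = cv I' (τ m)) ↔ (I = I' ∧ σ = τ) := by
  constructor
  · intro hall
    have hall' : ∀ m, I.val (σ m) = I'.val (τ m) := by
      intro m
      have := hall m
      simp only [cv] at this
      exact Fin.ext (by exact_mod_cast this)
    have hf : ∀ m, I'.val m = I.val (σ (τ.symm m)) := by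
      intro m
      have := hall' (τ.symm m)
      simpa using this.symm
    have hmono : StrictMono (fun m => σ (τ.symm m)) := by
      intro a b hab
      have h1 : I'.val b < I'.val a := conf_strictAnti I' hab
      rw [hf a, hf b] at h1
      exact ((conf_strictAnti I).lt_iff_gt).mp h1
    haveI : WellFoundedLT (Fin k) := inferInstance
    have hid : (fun m => σ (τ.symm m)) = id := by
      refine (hmono.range_inj strictMono_id).mp ?_
      rw [Set.range_id]
      exact Set.range_eq_univ.mpr fun y => ⟨τ (σ.symm y), by simp⟩
    have hστ : σ = τ := Equiv.ext fun m => by simpa using congrFun hid (τ m)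
    subst hστ
    refine ⟨?_, rfl⟩
    refine Subtype.ext (funext fun j => ?_)
    have := hall' (σ.symm j)
    simpa using this
  · rintro ⟨rfl, rfl⟩
    intro m; rfl


lemma cv_nonneg {k n : ℕ} (I : Conf k n) (i : Fin k) : 0 ≤ cv I i := by
  simp [cv]

lemma cv_lt {k n : ℕ} (I : Conf k n) (i : Fin k) : cv I i < n := by
  simp only [cv]
  exact_mod_cast (I.val i).isLt

lemma sum_G {k n : ℕ} (hn : 0 < n) (I I' : Conf k n) :
    ∑ J : Conf k n,
      (Matrix.det (Matrix.of fun l m : Fin k => W n (cv I l * cv J m)) *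
       Matrix.det (Matrix.of fun l m : Fin k => W n (-(cv I' l) * cv J m))) =
    if I = I' then (n : ℂ) ^ k else 0 := by
  classical
  set G : (Fin k → Fin n) → ℂ := fun g =>
    Matrix.det (Matrix.of fun l m : Fin k => W n (cv I l * ((g m : ℕ) : ℤ))) *
    Matrix.det (Matrix.of fun l m : Fin k => W n (-(cv I' l) * ((g m : ℕ) : ℤ))) with hG
  have key : ∑ g : Fin k → Fin n, G g =
      if I = I' then ((Nat.factorial k : ℂ) * (n : ℂ) ^ k) else 0 := by
    have hdet : ∀ g : Fin k → Fin n, G g =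
        ∑ σ : Equiv.Perm (Fin k), ∑ τ : Equiv.Perm (Fin k),
          (((Equiv.Perm.sign σ : ℤ) : ℂ) * ((Equiv.Perm.sign τ : ℤ) : ℂ)) *
          ∏ m, (W n (cv I (σ m) * ((g m : ℕ) : ℤ)) *
                W n (-(cv I' (τ m)) * ((g m : ℕ) : ℤ))) := by
      intro g
      rw [hG]
      simp only [Matrix.det_apply', Matrix.of_apply, Finset.sum_mul_sum]
      refine Finset.sum_congr rfl fun σ _ => Finset.sum_congr rfl fun τ _ => ?_
      rw [Finset.prod_mul_distrib]
      ring
    calc ∑ g : Fin k → Fin n, G g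
        = ∑ g : Fin k → Fin n, ∑ σ : Equiv.Perm (Fin k), ∑ τ : Equiv.Perm (Fin k),
            (((Equiv.Perm.sign σ : ℤ) : ℂ) * ((Equiv.Perm.sign τ : ℤ) : ℂ)) *
            ∏ m, (W n (cv I (σ m) * ((g m : ℕ) : ℤ)) *
                  W n (-(cv I' (τ m)) * ((g m : ℕ) : ℤ))) :=
          Finset.sum_congr rfl fun g _ => hdet g
      _ = ∑ σ : Equiv.Perm (Fin k), ∑ τ : Equiv.Perm (Fin k), ∑ g : Fin k → Fin n,
            (((Equiv.Perm.sign σ : ℤ) : ℂ) * ((Equiv.Perm.sign τ : ℤ) : ℂ)) *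
            ∏ m, (W n (cv I (σ m) * ((g m : ℕ) : ℤ)) *
                  W n (-(cv I' (τ m)) * ((g m : ℕ) : ℤ))) := by
          rw [Finset.sum_comm]
          exact Finset.sum_congr rfl fun σ _ => Finset.sum_comm
      _ = ∑ σ : Equiv.Perm (Fin k), ∑ τ : Equiv.Perm (Fin k),
            (((Equiv.Perm.sign σ : ℤ) : ℂ) * ((Equiv.Perm.sign τ : ℤ) : ℂ)) *
            (if (∀ m, cv I (σ m) = cv I' (τ m)) then (n : ℂ) ^ k else 0) := by
          refine Finset.sum_congr rfl fun σ _ => Finset.sum_congr rfl fun τ _ => ?_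
          rw [← Finset.mul_sum]
          congr 1
          have hswap : ∑ g : Fin k → Fin n,
              ∏ m, (W n (cv I (σ m) * ((g m : ℕ) : ℤ)) *
                    W n (-(cv I' (τ m)) * ((g m : ℕ) : ℤ))) =
              ∏ m, ∑ j : Fin n,
                (W n (cv I (σ m) * ((j : ℕ) : ℤ)) * W n (-(cv I' (τ m)) * ((j : ℕ) : ℤ))) :=
            (Fintype.prod_sum (κ := fun _ : Fin k => Fin n)
              (fun m j => W n (cv I (σ m) * ((j : ℕ) : ℤ)) *
                W n (-(cv I' (τ m)) * ((j : ℕ) : ℤ)))).symm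
          rw [hswap]
          have hterm : ∀ m : Fin k, (∑ j : Fin n,
              (W n (cv I (σ m) * ((j : ℕ) : ℤ)) * W n (-(cv I' (τ m)) * ((j : ℕ) : ℤ)))) =
              if cv I (σ m) = cv I' (τ m) then (n : ℂ) else 0 := by
            intro m
            have hW : ∀ j : Fin n,
                W n (cv I (σ m) * ((j : ℕ) : ℤ)) * W n (-(cv I' (τ m)) * ((j : ℕ) : ℤ)) =
                W n ((cv I (σ m) - cv I' (τ m)) * ((j : ℕ) : ℤ)) := by
              intro j
              rw [← W_add]
              congr 1
              ring
            rw [Finset.sum_congr rfl fun j _ => hW j]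
            have hbound : (cv I (σ m) - cv I' (τ m)).natAbs < n := by
              have h1 := cv_nonneg I (σ m); have h2 := cv_lt I (σ m)
              have h3 := cv_nonneg I' (τ m); have h4 := cv_lt I' (τ m)
              omega
            rw [W_geom hn hbound]
            simp [sub_eq_zero]
          rw [Finset.prod_congr rfl fun m _ => hterm m]
          by_cases hall : ∀ m, cv I (σ m) = cv I' (τ m)
          · rw [if_pos hall]
            rw [Finset.prod_congr rfl fun m _ => if_pos (hall m)]
            simp
          · rw [if_neg hall]
            push_neg at hall
            obtain ⟨m0, hm0⟩ := hall
            exact Finset.prod_eq_zero (Finset.mem_univ m0) (if_neg hm0)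
      _ = if I = I' then ((Nat.factorial k : ℂ) * (n : ℂ) ^ k) else 0 := by
          by_cases hII : I = I'
          · subst hII
            rw [if_pos rfl]
            have hcond : ∀ σ τ : Equiv.Perm (Fin k),
                (if (∀ m, cv I (σ m) = cv I (τ m)) then ((n : ℂ)) ^ k else 0) =
                if σ = τ then ((n : ℂ)) ^ k else 0 := by
              intro σ τ
              congr 1
              simp only [eq_iff_iff]
              rw [cond_iff I I σ τ]
              simp
            calc ∑ σ : Equiv.Perm (Fin k), ∑ τ : Equiv.Perm (Fin k),
                  (((Equiv.Perm.sign σ : ℤ) : ℂ) * ((Equiv.Perm.sign τ : ℤ) : ℂ)) *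
                  (if (∀ m, cv I (σ m) = cv I (τ m)) then (n : ℂ) ^ k else 0)
                = ∑ σ : Equiv.Perm (Fin k), ∑ τ : Equiv.Perm (Fin k),
                  (if σ = τ then (((Equiv.Perm.sign σ : ℤ) : ℂ) * ((Equiv.Perm.sign τ : ℤ) : ℂ)) *
                    (n : ℂ) ^ k else 0) := by
                  refine Finset.sum_congr rfl fun σ _ => Finset.sum_congr rfl fun τ _ => ?_
                  rw [hcond σ τ]
                  by_cases hst : σ = τ <;> simp [hst]
              _ = ∑ σ : Equiv.Perm (Fin k),
                  (((Equiv.Perm.sign σ : ℤ) : ℂ) * ((Equiv.Perm.sign σ : ℤ) : ℂ)) * (n : ℂ) ^ k := by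
                  refine Finset.sum_congr rfl fun σ _ => ?_
                  rw [Finset.sum_ite_eq (Finset.univ : Finset (Equiv.Perm (Fin k))) σ]
                  simp
              _ = ∑ _σ : Equiv.Perm (Fin k), (n : ℂ) ^ k := by
                  refine Finset.sum_congr rfl fun σ _ => ?_
                  have hs : ((Equiv.Perm.sign σ : ℤ) : ℂ) * ((Equiv.Perm.sign σ : ℤ) : ℂ) = 1 := by
                    rcases Int.units_eq_one_or (Equiv.Perm.sign σ) with h | h <;> rw [h] <;> norm_num
                  rw [hs, one_mul]
              _ = ((Nat.factorial k : ℂ) * (n : ℂ) ^ k) := by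
                  rw [Finset.sum_const, Finset.card_univ, Fintype.card_perm, Fintype.card_fin,
                    nsmul_eq_mul]
          · rw [if_neg hII]
            refine Finset.sum_eq_zero fun σ _ => Finset.sum_eq_zero fun τ _ => ?_
            have hno : ¬ (∀ m, cv I (σ m) = cv I' (τ m)) := by
              intro hall
              exact hII ((cond_iff I I' σ τ).mp hall).1
            rw [if_neg hno, mul_zero]
  have hGperm : ∀ (g : Fin k → Fin n) (π : Equiv.Perm (Fin k)), G (g ∘ π) = G g := by
    intro g π
    rw [hG]
    have e1 : (Matrix.of fun l m : Fin k => W n (cv I l * (((g ∘ π) m : ℕ) : ℤ))) =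
        (Matrix.of fun l m : Fin k => W n (cv I l * ((g m : ℕ) : ℤ))).submatrix id π := rfl
    have e2 : (Matrix.of fun l m : Fin k => W n (-(cv I' l) * (((g ∘ π) m : ℕ) : ℤ))) =
        (Matrix.of fun l m : Fin k => W n (-(cv I' l) * ((g m : ℕ) : ℤ))).submatrix id π := rfl
    simp only [e1, e2, Matrix.det_permute']
    have hsgn : ((Equiv.Perm.sign π : ℤ) : ℂ) * ((Equiv.Perm.sign π : ℤ) : ℂ) = 1 := by
      rcases Int.units_eq_one_or (Equiv.Perm.sign π) with h | h <;> rw [h] <;> norm_num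
    push_cast
    calc _ = (((Equiv.Perm.sign π : ℤ) : ℂ) * ((Equiv.Perm.sign π : ℤ) : ℂ)) *
        (Matrix.det (Matrix.of fun l m : Fin k => W n (cv I l * ((g m : ℕ) : ℤ))) *
         Matrix.det (Matrix.of fun l m : Fin k => W n (-(cv I' l) * ((g m : ℕ) : ℤ)))) := by
          push_cast
          ring
      _ = _ := by rw [hsgn, one_mul]
  have hGzero : ∀ g : Fin k → Fin n, ¬ Function.Injective g → G g = 0 := by
    intro g hg
    rw [Function.not_injective_iff] at hg
    obtain ⟨a, b, hab, hne⟩ := hg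
    have hz : Matrix.det (Matrix.of fun l m : Fin k => W n (cv I l * ((g m : ℕ) : ℤ))) = 0 := by
      refine Matrix.det_zero_of_column_eq hne fun l => ?_
      simp [hab]
    show (Matrix.of fun l m : Fin k => W n (cv I l * ((g m : ℕ) : ℤ))).det *
        (Matrix.of fun l m : Fin k => W n (-(cv I' l) * ((g m : ℕ) : ℤ))).det = 0
    rw [hz, zero_mul]
  have hsplit : ∑ g : Fin k → Fin n, G g = (Nat.factorial k : ℂ) * ∑ J : Conf k n, G J.val := by
    have h1 : ∑ g : Fin k → Fin n, G g =
        ∑ g ∈ Finset.univ.filter (fun g : Fin k → Fin n => Function.Injective g), G g := by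
      symm
      refine Finset.sum_subset (Finset.filter_subset _ _) fun g _ hg => ?_
      refine hGzero g ?_
      intro hinj
      exact hg (Finset.mem_filter.mpr ⟨Finset.mem_univ g, hinj⟩)
    rw [h1]
    have h2 : ∑ g ∈ Finset.univ.filter (fun g : Fin k → Fin n => Function.Injective g), G g =
        ∑ p : Conf k n × Equiv.Perm (Fin k), G (p.1.val ∘ ⇑p.2) := by
      symm
      refine Finset.sum_bij (fun p _ => p.1.val ∘ ⇑p.2) ?_ ?_ ?_ ?_
      · intro p _
        refine Finset.mem_filter.mpr ⟨Finset.mem_univ _, ?_⟩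
        exact (conf_strictAnti p.1).injective.comp p.2.injective
      · intro p _ q _ hpq
        exact phi_inj hpq
      · intro g hg
        obtain ⟨p, hp⟩ := phi_surj g (Finset.mem_filter.mp hg).2
        exact ⟨p, Finset.mem_univ p, hp⟩
      · intro p _
        rfl
    rw [h2]
    calc ∑ p : Conf k n × Equiv.Perm (Fin k), G (p.1.val ∘ ⇑p.2)
        = ∑ p : Conf k n × Equiv.Perm (Fin k), G p.1.val :=
          Finset.sum_congr rfl fun p _ => hGperm p.1.val p.2
      _ = (Nat.factorial k : ℂ) * ∑ J : Conf k n, G J.val := by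
          rw [Fintype.sum_prod_type]
          rw [Finset.mul_sum]
          refine Finset.sum_congr rfl fun J _ => ?_
          simp [Finset.sum_const, Finset.card_univ, Fintype.card_perm, Fintype.card_fin,
            nsmul_eq_mul]
  have hfac : (Nat.factorial k : ℂ) ≠ 0 := Nat.cast_ne_zero.mpr (Nat.factorial_ne_zero k)
  have hsum : ∑ J : Conf k n, G J.val =
      if I = I' then (n : ℂ) ^ k else 0 := by
    have hh := hsplit.symm.trans key
    by_cases hII : I = I'
    · rw [if_pos hII] at hh ⊢
      exact mul_left_cancel₀ hfac hh
    · rw [if_neg hII] at hh ⊢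
      rcases mul_eq_zero.mp hh with h | h
      · exact absurd h hfac
      · exact h
  rw [← hsum]
  rfl

lemma vdm_ne_zero {k n : ℕ} (hn : 0 < n) (I : Conf k n) :
    Vdm k (xi k n (cv I)) ≠ 0 := by
  classical
  set u := xi k n (cv I) with hu
  set x : Fin k → ℂ := fun l => Complex.exp (Complex.I * (u l : ℂ)) with hx
  have hM : Vdm k u = Matrix.det (Matrix.of fun l m : Fin k => x l ^ (I0 k m)) := by
    rw [Vdm, aJ]
    congr 1
    ext l m
    rw [Matrix.of_apply, Matrix.of_apply, hx, ← Complex.exp_int_mul]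
    congr 1
    ring
  have hsub : (Matrix.of fun l m : Fin k => x l ^ (I0 k m)).submatrix id Fin.revPerm =
      Matrix.vandermonde x := by
    ext l m
    simp only [Matrix.submatrix_apply, Matrix.of_apply, Matrix.vandermonde_apply, id]
    have hexp : I0 k (Fin.revPerm m) = ((m : ℕ) : ℤ) := by
      simp only [I0, Fin.revPerm_apply, Fin.val_rev]
      have := m.isLt
      omega
    rw [hexp, zpow_natCast]
  have hvd : Matrix.det (Matrix.vandermonde x) =
      (Equiv.Perm.sign (Fin.revPerm : Equiv.Perm (Fin k)) : ℤ) *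
        Matrix.det (Matrix.of fun l m : Fin k => x l ^ (I0 k m)) := by
    rw [← hsub, Matrix.det_permute']
  have hxinj : Function.Injective x := by
    intro a b hab
    rw [hx] at hab
    simp only at hab
    rw [Complex.exp_eq_exp_iff_exists_int] at hab
    obtain ⟨t, ht⟩ := hab
    have h6 : Complex.I * (u a : ℂ) = Complex.I * ((u b : ℂ) + (t : ℂ) * (2 * Real.pi)) := by
      rw [ht]; ring
    have h5 := mul_left_cancel₀ Complex.I_ne_zero h6
    have h7 : (u a : ℝ) = u b + t * (2 * Real.pi) := by exact_mod_cast h5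
    have hπ : (2 * Real.pi) ≠ 0 := by positivity
    have hn' : (n : ℝ) ≠ 0 := Nat.cast_ne_zero.mpr hn.ne'
    have h8 : (2 * Real.pi) * ((cv I a : ℝ) - cv I b) = (2 * Real.pi) * ((n : ℝ) * t) := by
      rw [hu] at h7
      simp only [xi] at h7
      field_simp at h7
      linear_combination Real.pi * h7
    have h9 := mul_left_cancel₀ hπ h8
    have h10 : (cv I a - cv I b : ℤ) = (n : ℤ) * t := by exact_mod_cast h9
    have hb1 : cv I a < n := by simp only [cv]; exact_mod_cast (I.val a).isLt
    have hb2 : cv I b < n := by simp only [cv]; exact_mod_cast (I.val b).isLt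
    have hb3 : (0:ℤ) ≤ cv I a := by simp [cv]
    have hb4 : (0:ℤ) ≤ cv I b := by simp [cv]
    have ht0 : t = 0 := by
      rcases lt_trichotomy t 0 with h | h | h
      · nlinarith [h10, hb1, hb2, hb3, hb4]
      · exact h
      · nlinarith [h10, hb1, hb2, hb3, hb4]
    rw [ht0] at h10
    simp at h10
    have : I.val a = I.val b := by
      apply Fin.ext
      have : cv I a = cv I b := by omega
      simpa [cv] using this
    exact (conf_strictAnti I).injective this
  have hvne : Matrix.det (Matrix.vandermonde x) ≠ 0 :=
    Matrix.det_vandermonde_ne_zero_iff.mpr hxinj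
  intro h0
  rw [hM] at h0
  rw [h0, mul_zero] at hvd
  exact hvne hvd

lemma orth {k n : ℕ} (hk : 1 ≤ k) (hkn : k ≤ n) (I I' : Conf k n) :
    (∑ J : Conf k n, SJ k (cv J) (xi k n (cv I)) *
        (starRingEnd ℂ) (SJ k (cv J) (xi k n (cv I')))) =
      if I = I' then ((n : ℂ) ^ k / (‖Vdm k (xi k n (cv I))‖ ^ 2 : ℝ)) else 0 := by
  have hn : 0 < n := lt_of_lt_of_le hk hkn
  have hV : Vdm k (xi k n (cv I)) ≠ 0 := vdm_ne_zero hn I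
  have hV' : Vdm k (xi k n (cv I')) ≠ 0 := vdm_ne_zero hn I'
  have hterm : ∀ J : Conf k n,
      SJ k (cv J) (xi k n (cv I)) * (starRingEnd ℂ) (SJ k (cv J) (xi k n (cv I'))) =
      (aJ k (cv J) (xi k n (cv I)) * (starRingEnd ℂ) (aJ k (cv J) (xi k n (cv I')))) /
        (Vdm k (xi k n (cv I)) * (starRingEnd ℂ) (Vdm k (xi k n (cv I')))) := by
    intro J
    rw [SJ, SJ, map_div₀, div_mul_div_comm]
  rw [Finset.sum_congr rfl fun J _ => hterm J, ← Finset.sum_div]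
  rw [Finset.sum_congr rfl fun J _ => aJ_mul_conj k n (cv I) (cv I') (cv J)]
  rw [sum_G hn I I']
  by_cases hII : I = I'
  · subst hII
    rw [if_pos rfl, if_pos rfl]
    congr 1
    rw [Complex.mul_conj, ← Complex.sq_norm]
  · rw [if_neg hII, if_neg hII, zero_div]

/-- the orthogonality relations
`Σ_{J∈B_{k,n}} S_J(ξ_n(I)) conj(S_J(ξ_n(I'))) = δ_{I,I'} n^k/|V(ξ_n(I))|²`; in particular the
vectors `w^{(I)} = (conj S_J(ξ_n(I)))_J` form an orthogonal (hence linearly independent) family. -/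
theorem stmt10 (k n : ℕ) (hk : 1 ≤ k) (hkn : k ≤ n) :
    (∀ I I' : Conf k n,
      (∑ J : Conf k n, SJ k (cv J) (xi k n (cv I)) *
          (starRingEnd ℂ) (SJ k (cv J) (xi k n (cv I')))) =
        if I = I' then ((n : ℂ) ^ k / (‖Vdm k (xi k n (cv I))‖ ^ 2 : ℝ)) else 0) ∧
    LinearIndependent ℂ
      (fun I : Conf k n => fun J : Conf k n =>
        (starRingEnd ℂ) (SJ k (cv J) (xi k n (cv I)))) := by
  have hn : 0 < n := lt_of_lt_of_le hk hkn
  refine ⟨fun I I' => orth hk hkn I I', ?_⟩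
  rw [Fintype.linearIndependent_iff]
  intro g hg I₀
  have hgJ : ∀ J : Conf k n,
      ∑ I : Conf k n, g I * (starRingEnd ℂ) (SJ k (cv J) (xi k n (cv I))) = 0 := by
    intro J
    have := congrFun hg J
    simpa [Finset.sum_apply] using this
  set c : ℂ := (n : ℂ) ^ k / (‖Vdm k (xi k n (cv I₀))‖ ^ 2 : ℝ) with hc
  have hcne : c ≠ 0 := by
    rw [hc]
    apply div_ne_zero
    · exact pow_ne_zero _ (Nat.cast_ne_zero.mpr hn.ne')
    · have h1 : ‖Vdm k (xi k n (cv I₀))‖ ≠ 0 :=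
        norm_ne_zero_iff.mpr (vdm_ne_zero hn I₀)
      exact_mod_cast pow_ne_zero 2 (by exact_mod_cast h1 : ((‖Vdm k (xi k n (cv I₀))‖) : ℂ) ≠ 0)
  have h1 : ∑ J : Conf k n, SJ k (cv J) (xi k n (cv I₀)) *
      (∑ I : Conf k n, g I * (starRingEnd ℂ) (SJ k (cv J) (xi k n (cv I)))) = 0 := by
    refine Finset.sum_eq_zero fun J _ => ?_
    rw [hgJ J, mul_zero]
  have h2 : ∑ J : Conf k n, SJ k (cv J) (xi k n (cv I₀)) *
      (∑ I : Conf k n, g I * (starRingEnd ℂ) (SJ k (cv J) (xi k n (cv I)))) =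
      ∑ I : Conf k n, g I * ∑ J : Conf k n, SJ k (cv J) (xi k n (cv I₀)) *
        (starRingEnd ℂ) (SJ k (cv J) (xi k n (cv I))) := by
    calc ∑ J : Conf k n, SJ k (cv J) (xi k n (cv I₀)) *
        (∑ I : Conf k n, g I * (starRingEnd ℂ) (SJ k (cv J) (xi k n (cv I))))
        = ∑ J : Conf k n, ∑ I : Conf k n, g I * (SJ k (cv J) (xi k n (cv I₀)) *
            (starRingEnd ℂ) (SJ k (cv J) (xi k n (cv I)))) := by
          refine Finset.sum_congr rfl fun J _ => ?_
          rw [Finset.mul_sum]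
          exact Finset.sum_congr rfl fun I _ => by ring
      _ = ∑ I : Conf k n, ∑ J : Conf k n, g I * (SJ k (cv J) (xi k n (cv I₀)) *
            (starRingEnd ℂ) (SJ k (cv J) (xi k n (cv I)))) := Finset.sum_comm
      _ = ∑ I : Conf k n, g I * ∑ J : Conf k n, SJ k (cv J) (xi k n (cv I₀)) *
            (starRingEnd ℂ) (SJ k (cv J) (xi k n (cv I))) := by
          refine Finset.sum_congr rfl fun I _ => ?_
          rw [Finset.mul_sum]
  have h3 : ∑ I : Conf k n, g I * ∑ J : Conf k n, SJ k (cv J) (xi k n (cv I₀)) *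
      (starRingEnd ℂ) (SJ k (cv J) (xi k n (cv I))) = g I₀ * c := by
    have : ∀ I : Conf k n, g I * (∑ J : Conf k n, SJ k (cv J) (xi k n (cv I₀)) *
        (starRingEnd ℂ) (SJ k (cv J) (xi k n (cv I)))) =
        if I₀ = I then g I * c else 0 := by
      intro I
      rw [orth hk hkn I₀ I]
      by_cases h : I₀ = I
      · subst h; simp [hc]
      · simp [h]
    rw [Finset.sum_congr rfl fun I _ => this I, Finset.sum_ite_eq]
    simp
  have : g I₀ * c = 0 := by rw [← h3, ← h2, h1]
  exact (mul_eq_zero.mp this).resolve_right hcne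


end Paper
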